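/- Let F(z⁻¹) = I + F₁z⁻¹ + ... + F_q z⁻^q be a stable matrix polynomial (all roots of det F(z⁻¹) strictly inside the unit disc) acting on sequences in ℝ^m, and let V(k) satisfy F(z⁻¹)V(k) = r(k) + e(k), where (r(k)) is a bounded sequence. Then there exist constants ℓ₁ ≥ 0 and ℓ₂ > 0 such that ‖V(k)‖ ≤ ℓ₁ + ℓ₂ max_{0≤τ≤k} ‖e(τ)‖ for all k. -/

import Mathlib

open Filter Topology Finset


namespace Stmt16Aux

noncomputable section

/-- predicate: constant coeff nonzero and inverse has abs-summable coefficients -/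
def Good (φ : PowerSeries ℂ) : Prop :=
  PowerSeries.constantCoeff φ ≠ 0 ∧ Summable (fun n => ‖PowerSeries.coeff n φ⁻¹‖)

lemma good_C (a : ℂ) (ha : a ≠ 0) : Good (PowerSeries.C a) := by
  constructor
  · simpa using ha
  · have hinv : (PowerSeries.C a)⁻¹ = PowerSeries.C a⁻¹ := by
      rw [PowerSeries.inv_eq_iff_mul_eq_one (by simpa using ha)]
      rw [← map_mul, inv_mul_cancel₀ ha, map_one]
    rw [hinv]
    apply summable_of_ne_finset_zero (s := {0})
    intro n hn
    simp only [Finset.mem_singleton] at hn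
    simp [PowerSeries.coeff_C, hn]

lemma good_X_sub_C (lam : ℂ) (h : 1 < ‖lam‖) :
    Good (PowerSeries.X - PowerSeries.C lam) := by
  have hlam : lam ≠ 0 := by
    intro h0; rw [h0] at h; simp at h; linarith
  have hc : PowerSeries.constantCoeff (PowerSeries.X - PowerSeries.C lam) ≠ 0 := by
    simp [hlam]
  refine ⟨hc, ?_⟩
  have hinv : (PowerSeries.X - PowerSeries.C lam)⁻¹
      = PowerSeries.mk (fun n => -(lam⁻¹ ^ (n + 1))) := by
    rw [PowerSeries.inv_eq_iff_mul_eq_one hc]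
    ext n
    rw [mul_sub]
    cases n with
    | zero =>
      simp [PowerSeries.coeff_mul_C, PowerSeries.coeff_mk, inv_mul_cancel₀ hlam]
    | succ k =>
      simp only [map_sub, PowerSeries.coeff_succ_mul_X, PowerSeries.coeff_mul_C,
        PowerSeries.coeff_mk, PowerSeries.coeff_one, Nat.succ_ne_zero, if_false]
      rw [pow_succ]
      field_simp
      rw [one_div, show k + 1 + 1 = 2 + k by ring, pow_add, ← mul_assoc, ← mul_pow,
        mul_inv_cancel₀ hlam]
      ring
  rw [hinv]
  have hr : ‖lam⁻¹‖ < 1 := by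
    rw [norm_inv]
    rw [inv_lt_one_iff₀]
    right
    simpa using h
  have : Summable (fun n : ℕ => ‖lam⁻¹‖ ^ (n + 1)) := by
    simp_rw [pow_succ']
    exact (summable_geometric_of_lt_one (norm_nonneg _) hr).mul_left _
  apply this.congr
  intro n
  simp [norm_pow]

lemma good_mul {φ ψ : PowerSeries ℂ} (hφ : Good φ) (hψ : Good ψ) : Good (φ * ψ) := by
  obtain ⟨hφ0, hφs⟩ := hφ
  obtain ⟨hψ0, hψs⟩ := hψ
  have h0 : PowerSeries.constantCoeff (φ * ψ) ≠ 0 := by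
    rw [map_mul]; exact mul_ne_zero hφ0 hψ0
  refine ⟨h0, ?_⟩
  have hinv : (φ * ψ)⁻¹ = φ⁻¹ * ψ⁻¹ := by
    rw [PowerSeries.inv_eq_iff_mul_eq_one h0]
    calc φ⁻¹ * ψ⁻¹ * (φ * ψ) = (φ * φ⁻¹) * (ψ * ψ⁻¹) := by ring
    _ = 1 := by rw [PowerSeries.mul_inv_cancel _ hφ0, PowerSeries.mul_inv_cancel _ hψ0, one_mul]
  rw [hinv]
  have := summable_norm_sum_mul_antidiagonal_of_summable_norm hφs hψs
  apply this.congr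
  intro n
  rw [PowerSeries.coeff_mul]

lemma good_prod (s : Multiset ℂ) (hs : ∀ x ∈ s, 1 < ‖x‖) (a : ℂ) (ha : a ≠ 0) :
    Good ((Polynomial.C a * (s.map (fun x => Polynomial.X - Polynomial.C x)).prod :
      Polynomial ℂ) : PowerSeries ℂ) := by
  induction s using Multiset.induction with
  | empty => simpa [Polynomial.coe_C] using good_C a ha
  | cons lam s ih =>
    have h1 : (Polynomial.C a *
        ((lam ::ₘ s).map (fun x => Polynomial.X - Polynomial.C x)).prod : Polynomial ℂ)
        = (Polynomial.X - Polynomial.C lam) *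
          (Polynomial.C a * (s.map (fun x => Polynomial.X - Polynomial.C x)).prod) := by
      rw [Multiset.map_cons, Multiset.prod_cons]; ring
    rw [h1, Polynomial.coe_mul]
    have hgx := good_X_sub_C lam (hs lam (Multiset.mem_cons_self _ _))
    rw [Polynomial.coe_sub, Polynomial.coe_X, Polynomial.coe_C] at *
    exact good_mul hgx (ih (fun x hx => hs x (Multiset.mem_cons_of_mem hx)))

lemma good_poly (p : Polynomial ℂ) (h0 : p.coeff 0 ≠ 0)
    (hroots : ∀ z : ℂ, p.eval z = 0 → 1 < ‖z‖) :
    Good ((p : PowerSeries ℂ)) := by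
  have hp : p ≠ 0 := fun h => h0 (by simp [h])
  have hsplit := (IsAlgClosed.splits p).eq_prod_roots
  rw [show ((p : PowerSeries ℂ)) = ((Polynomial.C p.leadingCoeff * (Multiset.map (fun a => Polynomial.X - Polynomial.C a) p.roots).prod : Polynomial ℂ) : PowerSeries ℂ) from by rw [← hsplit]]
  exact good_prod p.roots
    (fun x hx => hroots x (Polynomial.isRoot_of_mem_roots hx))
    _ (Polynomial.leadingCoeff_ne_zero.mpr hp)


lemma coe_map_powerSeries (f : ℝ →+* ℂ) (d : Polynomial ℝ) :
    ((d.map f : Polynomial ℂ) : PowerSeries ℂ) = PowerSeries.map f (d : PowerSeries ℝ) := by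
  ext n
  simp [Polynomial.coeff_coe, Polynomial.coeff_map]

lemma summable_real (d : Polynomial ℝ) (h0 : d.coeff 0 = 1)
    (hroots : ∀ z : ℂ, (d.map (Complex.ofRealHom)).eval z = 0 → 1 < ‖z‖) :
    Summable (fun n => |PowerSeries.coeff n ((d : PowerSeries ℝ))⁻¹|) := by
  set f := Complex.ofRealHom
  set dc := d.map f with hdc
  have hdc0 : dc.coeff 0 ≠ 0 := by
    simp [hdc, Polynomial.coeff_map, h0]
  have hgood : Good ((dc : PowerSeries ℂ)) := good_poly dc hdc0 hroots
  have hccd : PowerSeries.constantCoeff (dc : PowerSeries ℂ) ≠ 0 := by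
    rwa [Polynomial.constantCoeff_coe]
  have hccr : PowerSeries.constantCoeff (d : PowerSeries ℝ) ≠ 0 := by
    rw [Polynomial.constantCoeff_coe, h0]; norm_num
  have hinv : ((dc : PowerSeries ℂ))⁻¹ = PowerSeries.map f ((d : PowerSeries ℝ))⁻¹ := by
    rw [eq_comm, PowerSeries.eq_inv_iff_mul_eq_one hccd, coe_map_powerSeries, ← map_mul]
    rw [mul_comm, PowerSeries.mul_inv_cancel _ hccr, map_one]
  have := hgood.2
  rw [hinv] at this
  apply this.congr
  intro n
  rw [PowerSeries.coeff_map]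
  simp [f]

end

end Stmt16Aux

open Polynomial in
lemma Stmt16Aux.sum_range_abs_coeff_le (p : Polynomial ℝ) (N : ℕ) :
    ∑ s ∈ Finset.range N, |p.coeff s| ≤ ∑ s ∈ p.support, |p.coeff s| := by
  classical
  rw [← Finset.sum_filter_of_ne (p := fun s => p.coeff s ≠ 0)
    (fun x _ h => fun h0 => h (by simp [h0]))]
  apply Finset.sum_le_sum_of_subset_of_nonneg
  · intro x hx
    rw [Finset.mem_filter] at hx
    exact Polynomial.mem_support_iff.mpr hx.2
  · intro _ _ _; exact abs_nonneg _

lemma Stmt16Aux.coord_le_norm (m : ℕ) (x : EuclideanSpace ℝ (Fin m)) (a : Fin m) :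
    |x a| ≤ ‖x‖ := by
  rw [EuclideanSpace.norm_eq, ← Real.sqrt_sq_eq_abs]
  apply Real.sqrt_le_sqrt
  have : |x a| ^ 2 ≤ ∑ i, ‖x i‖ ^ 2 :=
    Finset.single_le_sum (f := fun i => ‖x i‖ ^ 2) (fun i _ => by positivity) (Finset.mem_univ a)
  simpa [Real.norm_eq_abs, sq_abs] using this

lemma Stmt16Aux.norm_le_sum_abs (m : ℕ) (x : EuclideanSpace ℝ (Fin m)) :
    ‖x‖ ≤ ∑ a, |x a| := by
  rw [EuclideanSpace.norm_eq]
  have h1 : ∑ i, ‖x i‖ ^ 2 ≤ (∑ a, |x a|) ^ 2 := by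
    simpa [Real.norm_eq_abs] using
      Finset.sum_sq_le_sq_sum_of_nonneg (s := Finset.univ) (f := fun i => |x i|)
      (fun i _ => abs_nonneg _)
  calc √(∑ i, ‖x i‖ ^ 2) ≤ √((∑ a, |x a|) ^ 2) := Real.sqrt_le_sqrt h1
  _ = ∑ a, |x a| := Real.sqrt_sq (by positivity)

set_option maxHeartbeats 2000000 in
theorem stmt_16 (m q : ℕ)
    (F : Fin (q + 1) → Matrix (Fin m) (Fin m) ℝ) (hF0 : F 0 = 1)
    (hstable : ∀ z : ℂ,
      (∑ i : Fin (q + 1), z ^ (q - (i : ℕ)) • (F i).map (Complex.ofReal)).det = 0 →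
        ‖z‖ < 1)
    (V : ℤ → EuclideanSpace ℝ (Fin m)) (r e : ℕ → EuclideanSpace ℝ (Fin m))
    (hV0 : ∀ j : ℤ, j < 0 → V j = 0)
    (heq : ∀ (k : ℕ) (a : Fin m),
      ∑ i : Fin (q + 1), ∑ l, F i a l * V ((k : ℤ) - (i : ℕ)) l = r k a + e k a)
    (hr : ∃ R : ℝ, ∀ k, ‖r k‖ ≤ R) :
    ∃ ℓ₁ : ℝ, 0 ≤ ℓ₁ ∧ ∃ ℓ₂ : ℝ, 0 < ℓ₂ ∧ ∀ k : ℕ, ‖V (k : ℤ)‖ ≤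
      ℓ₁ + ℓ₂ * (Finset.range (k + 1)).sup' Finset.nonempty_range_add_one (fun τ => ‖e τ‖) := by
  classical
  obtain ⟨R, hR⟩ := hr
  have hR0 : 0 ≤ R := le_trans (norm_nonneg _) (hR 0)
  -- the polynomial matrix
  set A : Matrix (Fin m) (Fin m) (Polynomial ℝ) :=
    Matrix.of (fun a l => ∑ i : Fin (q+1), Polynomial.C (F i a l) * Polynomial.X ^ (i : ℕ))
      with hA
  set d : Polynomial ℝ := A.det with hd
  set G : Matrix (Fin m) (Fin m) (Polynomial ℝ) := A.adjugate with hG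
  -- constant coefficient of d is 1
  have hA0 : A.map (Polynomial.constantCoeff) = (1 : Matrix (Fin m) (Fin m) ℝ) := by
    ext a l
    simp only [Matrix.map_apply, hA, Matrix.of_apply, map_sum]
    have : ∀ i : Fin (q+1),
        Polynomial.constantCoeff (Polynomial.C (F i a l) * Polynomial.X ^ (i:ℕ))
        = if i = 0 then F 0 a l else 0 := by
      intro i
      rcases eq_or_ne i 0 with h | h
      · subst h; simp
      · have hi : (i : ℕ) ≠ 0 := fun hc => h (Fin.ext hc)
        simp [Polynomial.constantCoeff_apply, Polynomial.coeff_X_pow, Ne.symm hi, h]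
    rw [Finset.sum_congr rfl (fun i _ => this i)]
    simp [hF0]
  have hd0 : d.coeff 0 = 1 := by
    have h1 : Polynomial.constantCoeff d = (A.map Polynomial.constantCoeff).det := by
      rw [RingHom.map_det]; rfl
    rw [← Polynomial.constantCoeff_apply] at *
    rw [h1, hA0, Matrix.det_one]
  -- roots of d (complexified) lie outside the closed unit disc
  have hroots : ∀ z : ℂ, (d.map (Complex.ofRealHom)).eval z = 0 → 1 < ‖z‖ := by
    intro w hw
    set ψ : Polynomial ℝ →+* ℂ :=
      (Polynomial.evalRingHom w).comp (Polynomial.mapRingHom Complex.ofRealHom) with hψ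
    have hψd : ψ d = 0 := hw
    have hmap : A.map ψ = ∑ i : Fin (q+1), w ^ (i : ℕ) • (F i).map (Complex.ofReal) := by
      ext a l
      simp only [Matrix.map_apply, hA, Matrix.of_apply, map_sum, Finset.sum_apply,
        Matrix.sum_apply, Matrix.smul_apply, smul_eq_mul]
      refine Finset.sum_congr rfl (fun i _ => ?_)
      simp only [hψ, RingHom.comp_apply, Polynomial.coe_mapRingHom, Polynomial.map_mul,
        Polynomial.map_C, Polynomial.map_pow, Polynomial.map_X, Polynomial.eval_mul,
        Polynomial.eval_C, Polynomial.eval_pow, Polynomial.eval_X, Polynomial.coe_evalRingHom,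
        Complex.ofRealHom_eq_coe]
      ring
    have hdet : (∑ i : Fin (q+1), w ^ (i : ℕ) • (F i).map (Complex.ofReal)).det = 0 := by
      rw [← hmap]
      have := RingHom.map_det ψ A
      rw [RingHom.mapMatrix_apply] at this
      rw [← this, ← hd, hψd]
    by_contra hle
    push_neg at hle
    have hw0 : w ≠ 0 := by
      intro h0
      rw [h0] at hdet
      have : (∑ i : Fin (q+1), (0:ℂ) ^ (i : ℕ) • (F i).map (Complex.ofReal))
          = (F 0).map (Complex.ofReal) := by
        rw [Fintype.sum_eq_single (0 : Fin (q+1))]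
        · simp
        · intro i hi
          have hi' : (i : ℕ) ≠ 0 := fun hc => hi (Fin.ext hc)
          simp [zero_pow hi']
      rw [this, hF0] at hdet
      simp at hdet
    set z : ℂ := w⁻¹ with hz
    have hzw : z * w = 1 := inv_mul_cancel₀ hw0
    have hsc : ∑ i : Fin (q+1), z ^ (q - (i : ℕ)) • (F i).map (Complex.ofReal)
        = z ^ q • ∑ i : Fin (q+1), w ^ (i : ℕ) • (F i).map (Complex.ofReal) := by
      rw [Finset.smul_sum]
      refine Finset.sum_congr rfl (fun i _ => ?_)
      rw [smul_smul]
      congr 1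
      have hle' : (i : ℕ) ≤ q := Fin.is_le i
      calc z ^ (q - (i:ℕ)) = z ^ (q - (i:ℕ)) * (z * w) ^ (i:ℕ) := by rw [hzw, one_pow, mul_one]
      _ = z ^ (q - (i:ℕ)) * z ^ (i:ℕ) * w ^ (i:ℕ) := by rw [mul_pow]; ring
      _ = z ^ q * w ^ (i:ℕ) := by rw [← pow_add, Nat.sub_add_cancel hle']
    have hdet2 : (∑ i : Fin (q+1), z ^ (q - (i : ℕ)) • (F i).map (Complex.ofReal)).det = 0 := by
      rw [hsc, Matrix.det_smul, hdet, mul_zero]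
    have hlt := hstable z hdet2
    rw [hz, norm_inv] at hlt
    have hwpos : 0 < ‖w‖ := by
      exact norm_pos_iff.mpr hw0
    have h1 : (1:ℝ) = ‖w‖ * (‖w‖)⁻¹ := (mul_inv_cancel₀ hwpos.ne').symm
    nlinarith
  -- summable inverse coefficients
  have hsum := Stmt16Aux.summable_real d hd0 hroots
  set c : ℕ → ℝ := fun n => PowerSeries.coeff n ((d : PowerSeries ℝ))⁻¹ with hc
  set Sc : ℝ := ∑' n, |c n| with hSc
  have hSc0 : 0 ≤ Sc := tsum_nonneg (fun _ => abs_nonneg _)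
  have hScle : ∀ N : ℕ, ∑ i ∈ Finset.range N, |c i| ≤ Sc :=
    fun N => Summable.sum_le_tsum _ (fun i _ => abs_nonneg _) hsum
  -- sequences as power series
  set u : ℕ → Fin m → ℝ := fun k a => r k a + e k a with hu
  set W : Fin m → PowerSeries ℝ := fun l => PowerSeries.mk (fun n => V n l) with hW
  set U : Fin m → PowerSeries ℝ := fun a => PowerSeries.mk (fun n => u n a) with hU
  set ρ : Polynomial ℝ →+* PowerSeries ℝ := Polynomial.coeToPowerSeries.ringHom with hρ
  set Ap : Matrix (Fin m) (Fin m) (PowerSeries ℝ) := A.map ρ with hAp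
  have hApa : ∀ a l, Ap a l
      = ∑ i : Fin (q+1), PowerSeries.C (F i a l) * PowerSeries.X ^ (i : ℕ) := by
    intro a l
    simp only [hAp, Matrix.map_apply, hA, Matrix.of_apply, map_sum, map_mul, map_pow]
    refine Finset.sum_congr rfl (fun i _ => ?_)
    rw [hρ, Polynomial.coeToPowerSeries.ringHom_apply,
      Polynomial.coeToPowerSeries.ringHom_apply, Polynomial.coe_C, Polynomial.coe_X]
  have hMV : Ap.mulVec W = U := by
    funext a
    ext n
    rw [Matrix.mulVec, dotProduct, map_sum]
    have hterm : ∀ l, (PowerSeries.coeff n) (Ap a l * W l)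
        = ∑ i : Fin (q+1), F i a l * (if (i : ℕ) ≤ n then V ((n - (i:ℕ) : ℕ) : ℤ) l else 0) := by
      intro l
      rw [hApa, Finset.sum_mul, map_sum]
      refine Finset.sum_congr rfl (fun i _ => ?_)
      have : PowerSeries.C (F i a l) * PowerSeries.X ^ (i:ℕ) * W l
          = PowerSeries.C (F i a l) * (W l * PowerSeries.X ^ (i:ℕ)) := by ring
      rw [this, PowerSeries.coeff_C_mul, PowerSeries.coeff_mul_X_pow']
      congr 1
      split
      · rw [hW, PowerSeries.coeff_mk]
      · rfl
    rw [Finset.sum_congr rfl (fun l _ => hterm l)]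
    have hrhs : (PowerSeries.coeff n) (U a) = u n a := by rw [hU, PowerSeries.coeff_mk]
    rw [hrhs, Finset.sum_comm, hu]
    have := heq n a
    rw [show (∑ i : Fin (q+1), ∑ l, F i a l
        * (if (i : ℕ) ≤ n then V ((n - (i:ℕ) : ℕ) : ℤ) l else 0))
        = ∑ i : Fin (q+1), ∑ l, F i a l * V ((n : ℤ) - (i : ℕ)) l from ?_]
    · exact this
    · refine Finset.sum_congr rfl (fun i _ => Finset.sum_congr rfl (fun l _ => ?_))
      congr 1
      split
      · rename_i h
        rw [show ((n - (i:ℕ) : ℕ) : ℤ) = (n : ℤ) - (i : ℕ) by omega]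
      · rename_i h
        rw [hV0 _ (by omega)]
        rfl
  have hdet' : Ap.det = (d : PowerSeries ℝ) := by
    rw [hAp, ← RingHom.mapMatrix_apply, ← RingHom.map_det, hd, hρ,
      Polynomial.coeToPowerSeries.ringHom_apply]
  have hadj : Ap.adjugate = G.map ρ := by
    rw [hAp, ← RingHom.mapMatrix_apply, ← RingHom.map_adjugate, hG, RingHom.mapMatrix_apply]
  have hkey : ∀ l, (d : PowerSeries ℝ) * W l = (G.map ρ).mulVec U l := by
    intro l
    have h2 : (G.map ρ).mulVec U = (Ap.adjugate * Ap).mulVec W := by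
      rw [← hMV, Matrix.mulVec_mulVec, hadj]
    rw [h2, Matrix.adjugate_mul, hdet', Matrix.smul_mulVec, Matrix.one_mulVec]
    simp
  have hccd : PowerSeries.constantCoeff (d : PowerSeries ℝ) ≠ 0 := by
    rw [Polynomial.constantCoeff_coe, hd0]; norm_num
  have hinvd : ((d : PowerSeries ℝ))⁻¹ * (d : PowerSeries ℝ) = 1 := by
    rw [mul_comm]; exact PowerSeries.mul_inv_cancel _ hccd
  have hWl : ∀ l, W l = ((d : PowerSeries ℝ))⁻¹ * ((G.map ρ).mulVec U l) := by
    intro l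
    rw [← hkey l, ← mul_assoc, hinvd, one_mul]
  have hVcoeff : ∀ (k : ℕ) (l : Fin m), V (k : ℤ) l
      = ∑ p ∈ Finset.HasAntidiagonal.antidiagonal k, c p.1
          * PowerSeries.coeff p.2 ((G.map ρ).mulVec U l) := by
    intro k l
    have h1 : V (k : ℤ) l = PowerSeries.coeff k (W l) := by rw [hW, PowerSeries.coeff_mk]
    rw [h1, hWl l, PowerSeries.coeff_mul]
  -- constants
  set Kla : Fin m → Fin m → ℝ := fun l a => ∑ s ∈ (G l a).support, |(G l a).coeff s| with hKla
  have hKla0 : ∀ l a, 0 ≤ Kla l a := fun l a => Finset.sum_nonneg (fun _ _ => abs_nonneg _)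
  set K : ℝ := ∑ l, ∑ a, Kla l a with hK
  have hK0 : 0 ≤ K := Finset.sum_nonneg (fun l _ => Finset.sum_nonneg (fun a _ => hKla0 l a))
  refine ⟨Sc * K * R, by positivity, Sc * K + 1, by positivity, ?_⟩
  intro k
  set B : ℝ := (Finset.range (k + 1)).sup' Finset.nonempty_range_add_one (fun τ => ‖e τ‖) with hB
  have hB0 : 0 ≤ B :=
    le_trans (norm_nonneg (e 0)) (Finset.le_sup' (fun τ => ‖e τ‖) (by simp : 0 ∈ Finset.range (k+1)))
  have hRB0 : 0 ≤ R + B := by linarith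
  have hub : ∀ t, t ≤ k → ∀ a, |u t a| ≤ R + B := by
    intro t ht a
    have h1 : |u t a| ≤ |r t a| + |e t a| := abs_add_le _ _
    have h2 : |r t a| ≤ R := le_trans (Stmt16Aux.coord_le_norm m (r t) a) (hR t)
    have h3 : |e t a| ≤ B := le_trans (Stmt16Aux.coord_le_norm m (e t) a)
      (Finset.le_sup' (fun τ => ‖e τ‖) (by simp [Nat.lt_succ_iff, ht] : t ∈ Finset.range (k+1)))
    linarith
  have hYb : ∀ j, j ≤ k → ∀ l,
      |PowerSeries.coeff j ((G.map ρ).mulVec U l)| ≤ (∑ a, Kla l a) * (R + B) := by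
    intro j hj l
    rw [Matrix.mulVec, dotProduct, map_sum]
    calc |∑ a, PowerSeries.coeff j ((G.map ρ) l a * U a)|
        ≤ ∑ a, |PowerSeries.coeff j ((G.map ρ) l a * U a)| := Finset.abs_sum_le_sum_abs _ _
    _ ≤ ∑ a, Kla l a * (R + B) := by
        refine Finset.sum_le_sum (fun a _ => ?_)
        have hGa : (G.map ρ) l a = ((G l a : Polynomial ℝ) : PowerSeries ℝ) := by
          rw [Matrix.map_apply, hρ, Polynomial.coeToPowerSeries.ringHom_apply]
        rw [hGa, PowerSeries.coeff_mul]
        calc |∑ p ∈ Finset.HasAntidiagonal.antidiagonal j,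
              PowerSeries.coeff p.1 ((G l a : Polynomial ℝ) : PowerSeries ℝ)
              * PowerSeries.coeff p.2 (U a)|
            ≤ ∑ p ∈ Finset.HasAntidiagonal.antidiagonal j, |(G l a).coeff p.1| * |u p.2 a| := by
              refine le_trans (Finset.abs_sum_le_sum_abs _ _) (le_of_eq ?_)
              refine Finset.sum_congr rfl (fun p _ => ?_)
              rw [Polynomial.coeff_coe, hU, PowerSeries.coeff_mk, abs_mul]
        _ ≤ ∑ p ∈ Finset.HasAntidiagonal.antidiagonal j, |(G l a).coeff p.1| * (R + B) := by
              refine Finset.sum_le_sum (fun p hp => ?_)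
              have hp2 : p.2 ≤ k := by
                have := Finset.HasAntidiagonal.mem_antidiagonal.mp hp
                omega
              exact mul_le_mul_of_nonneg_left (hub p.2 hp2 a) (abs_nonneg _)
        _ = (∑ s ∈ Finset.range (j+1), |(G l a).coeff s|) * (R + B) := by
              rw [Finset.Nat.sum_antidiagonal_eq_sum_range_succ_mk, Finset.sum_mul]
        _ ≤ Kla l a * (R + B) :=
              mul_le_mul_of_nonneg_right (Stmt16Aux.sum_range_abs_coeff_le _ _) hRB0
    _ = (∑ a, Kla l a) * (R + B) := (Finset.sum_mul _ _ _).symm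
  have hVl : ∀ l, |V (k : ℤ) l| ≤ Sc * ((∑ a, Kla l a) * (R + B)) := by
    intro l
    rw [hVcoeff k l]
    calc |∑ p ∈ Finset.HasAntidiagonal.antidiagonal k, c p.1
          * PowerSeries.coeff p.2 ((G.map ρ).mulVec U l)|
        ≤ ∑ p ∈ Finset.HasAntidiagonal.antidiagonal k,
            |c p.1| * |PowerSeries.coeff p.2 ((G.map ρ).mulVec U l)| := by
          refine le_trans (Finset.abs_sum_le_sum_abs _ _) (le_of_eq ?_)
          exact Finset.sum_congr rfl (fun p _ => abs_mul _ _)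
    _ ≤ ∑ p ∈ Finset.HasAntidiagonal.antidiagonal k, |c p.1| * ((∑ a, Kla l a) * (R + B)) := by
          refine Finset.sum_le_sum (fun p hp => ?_)
          have hp2 : p.2 ≤ k := by
            have := Finset.HasAntidiagonal.mem_antidiagonal.mp hp
            omega
          exact mul_le_mul_of_nonneg_left (hYb p.2 hp2 l) (abs_nonneg _)
    _ = (∑ i ∈ Finset.range (k+1), |c i|) * ((∑ a, Kla l a) * (R + B)) := by
          rw [Finset.Nat.sum_antidiagonal_eq_sum_range_succ_mk]
          exact (Finset.sum_mul _ _ _).symm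
    _ ≤ Sc * ((∑ a, Kla l a) * (R + B)) := by
          refine mul_le_mul_of_nonneg_right (hScle (k+1)) ?_
          exact mul_nonneg (Finset.sum_nonneg (fun a _ => hKla0 l a)) hRB0
  calc ‖V (k : ℤ)‖ ≤ ∑ l, |V (k : ℤ) l| := Stmt16Aux.norm_le_sum_abs m (V (k:ℤ))
  _ ≤ ∑ l, Sc * ((∑ a, Kla l a) * (R + B)) := Finset.sum_le_sum (fun l _ => hVl l)
  _ = Sc * K * (R + B) := by rw [← Finset.mul_sum, ← Finset.sum_mul, ← hK]; ring
  _ = Sc * K * R + (Sc * K) * B := by ring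
  _ ≤ Sc * K * R + (Sc * K + 1) * B := by nlinarith
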